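/- Assume: (a) A is countably spanned, i.e. there is a countable subset of A whose ℂ-linear span is all of A; (b) π has no nonzero invariant vector, i.e. the only ξ ∈ H with π(a)ξ = ε(a)ξ for all a ∈ A is ξ = 0; and (c) every 1-cocycle c : A → H that is a pointwise limit of a sequence of inner cocycles (i.e. for which there is a sequence (ξ_n) in H with π(a)ξ_n − ε(a)ξ_n → c(a) for every a ∈ A) is itself inner. Then there exist a finite set S ⊆ A and δ > 0 such that for every ξ ∈ H one has max_{a ∈ S} ‖π(a)ξ − ε(a)ξ‖ ≥ δ‖ξ‖; in other words, π does not have almost invariant vectors. -/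

import Mathlib

open Filter Topology ENNReal
set_option linter.unusedSectionVars false
set_option maxHeartbeats 1000000

section Aux
variable {A : Type*} [Ring A] [Algebra ℂ A]
    {H : Type*} [NormedAddCommGroup H] [InnerProductSpace ℂ H] [CompleteSpace H]
    (π : A →ₐ[ℂ] (H →L[ℂ] H)) (ε : A →ₐ[ℂ] ℂ)

noncomputable def bdry (a : A) : H →L[ℂ] H := π a - ε a • ContinuousLinearMap.id ℂ H

lemma bdry_apply (a : A) (ξ : H) : bdry π ε a ξ = π a ξ - ε a • ξ := rfl

lemma bdry_add (x y : A) (ξ : H) :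
    bdry π ε (x + y) ξ = bdry π ε x ξ + bdry π ε y ξ := by
  simp [bdry_apply, map_add]; abel_nf; rw [add_smul]; abel

lemma bdry_smul (c : ℂ) (x : A) (ξ : H) :
    bdry π ε (c • x) ξ = c • bdry π ε x ξ := by
  simp [bdry_apply, map_smul, smul_sub, smul_smul]

lemma bdry_mul (x y : A) (ξ : H) :
    bdry π ε (x * y) ξ = π x (bdry π ε y ξ) + ε y • bdry π ε x ξ := by
  simp only [bdry_apply, map_mul, map_sub, map_smul, smul_sub, ContinuousLinearMap.mul_apply,
    smul_smul]
  rw [mul_comm (ε x) (ε y)]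
  abel

noncomputable def wt (f : ℕ → A) (i : ℕ) : ℝ := (1/2 : ℝ)^i * (1 + ‖bdry π ε (f i)‖)⁻¹

lemma wt_pos (f : ℕ → A) (i : ℕ) : 0 < wt π ε f i := by
  apply _root_.mul_pos (by positivity)
  rw [inv_pos]
  positivity

lemma wt_le (f : ℕ → A) (i : ℕ) : wt π ε f i ≤ (1/2 : ℝ)^i :=
  mul_le_of_le_one_right (by positivity)
    (by rw [inv_le_one_iff₀]; right; linarith [norm_nonneg (bdry π ε (f i))])

lemma wt_norm (f : ℕ → A) (i : ℕ) (ξ : H) :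
    ‖wt π ε f i • bdry π ε (f i) ξ‖ ≤ (1/2 : ℝ)^i * ‖ξ‖ := by
  have hB : (0:ℝ) ≤ ‖bdry π ε (f i)‖ := norm_nonneg _
  have h1 : ‖bdry π ε (f i) ξ‖ ≤ (1 + ‖bdry π ε (f i)‖) * ‖ξ‖ := by
    refine le_trans ((bdry π ε (f i)).le_opNorm ξ) ?_
    have := norm_nonneg ξ
    nlinarith
  rw [norm_smul, Real.norm_eq_abs, abs_of_pos (wt_pos π ε f i), wt, mul_assoc]
  have h2 : (1 + ‖bdry π ε (f i)‖)⁻¹ * ‖bdry π ε (f i) ξ‖ ≤ ‖ξ‖ := by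
    calc (1 + ‖bdry π ε (f i)‖)⁻¹ * ‖bdry π ε (f i) ξ‖
        ≤ (1 + ‖bdry π ε (f i)‖)⁻¹ * ((1 + ‖bdry π ε (f i)‖) * ‖ξ‖) := by
          apply mul_le_mul_of_nonneg_left h1
          positivity
      _ = ‖ξ‖ := by rw [← mul_assoc, inv_mul_cancel₀ (by positivity), one_mul]
  calc (1/2:ℝ)^i * ((1 + ‖bdry π ε (f i)‖)⁻¹ * ‖bdry π ε (f i) ξ‖)
      ≤ (1/2:ℝ)^i * ‖ξ‖ := by apply mul_le_mul_of_nonneg_left h2; positivity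

lemma summable_wt (f : ℕ → A) (ξ : H) :
    Summable fun i => ‖wt π ε f i • bdry π ε (f i) ξ‖ ^ ((2:ℝ≥0∞)).toReal := by
  have hpow : ∀ x:ℝ, x ^ ((2:ℝ≥0∞)).toReal = x^2 := fun x => by
    rw [ENNReal.toReal_ofNat, Real.rpow_two]
  simp only [hpow]
  refine Summable.of_nonneg_of_le
    (f := fun i => ((1/4:ℝ)^i) * ‖ξ‖^2) (fun i => ?_) (fun i => ?_) ?_
  · positivity
  · calc ‖wt π ε f i • bdry π ε (f i) ξ‖ ^ 2 ≤ ((1/2:ℝ)^i * ‖ξ‖)^2 := by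
          apply pow_le_pow_left₀ (norm_nonneg _) (wt_norm π ε f i ξ)
      _ = (1/4:ℝ)^i * ‖ξ‖^2 := by
          rw [mul_pow, ← pow_mul, mul_comm i 2, pow_mul]
          norm_num
  · exact (summable_geometric_of_lt_one (by norm_num) (by norm_num)).mul_right _

noncomputable def Tlin (f : ℕ → A) : H →ₗ[ℂ] lp (fun _ : ℕ => H) 2 where
  toFun ξ := ⟨fun i => wt π ε f i • bdry π ε (f i) ξ, memℓp_gen (summable_wt π ε f ξ)⟩
  map_add' x y := by
    ext i
    simp [lp.coeFn_add, smul_add, map_add]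
    rfl
  map_smul' c x := by
    ext i
    simp only [map_smul, RingHom.id_apply, lp.coeFn_smul, Pi.smul_apply]
    exact smul_comm _ _ _

lemma rpow_two' (x : ℝ) : x ^ ((2:ℝ≥0∞)).toReal = x^2 := by
  rw [ENNReal.toReal_ofNat, Real.rpow_two]

lemma Tlin_apply (f : ℕ → A) (ξ : H) (i : ℕ) :
    (Tlin π ε f ξ : ∀ _ : ℕ, H) i = wt π ε f i • bdry π ε (f i) ξ := rfl


lemma norm_sq_Tlin (f : ℕ → A) (ξ : H) :
    ‖Tlin π ε f ξ‖^2 = ∑' i, ‖wt π ε f i • bdry π ε (f i) ξ‖^2 := by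
  have := lp.norm_rpow_eq_tsum (p := 2) (by norm_num) (Tlin π ε f ξ)
  simpa only [rpow_two', Tlin_apply] using this

lemma norm_Tlin_le (f : ℕ → A) (ξ : H) : ‖Tlin π ε f ξ‖ ≤ 2 * ‖ξ‖ := by
  have h1 : ‖Tlin π ε f ξ‖^2 ≤ (2 * ‖ξ‖)^2 := by
    rw [norm_sq_Tlin]
    have hsum : Summable fun i => ((1/4:ℝ)^i) * ‖ξ‖^2 :=
      (summable_geometric_of_lt_one (by norm_num) (by norm_num)).mul_right _
    calc ∑' i, ‖wt π ε f i • bdry π ε (f i) ξ‖^2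
        ≤ ∑' i, ((1/4:ℝ)^i) * ‖ξ‖^2 := by
          refine Summable.tsum_le_tsum (fun i => ?_) ?_ hsum
          · calc ‖wt π ε f i • bdry π ε (f i) ξ‖^2
                ≤ ((1/2:ℝ)^i * ‖ξ‖)^2 :=
                  pow_le_pow_left₀ (norm_nonneg _) (wt_norm π ε f i ξ) 2
              _ = (1/4:ℝ)^i * ‖ξ‖^2 := by
                  rw [mul_pow, ← pow_mul, mul_comm i 2, pow_mul]; norm_num
          · have := summable_wt π ε f ξ
            simpa only [rpow_two'] using this
      _ = (1 - (1/4:ℝ))⁻¹ * ‖ξ‖^2 := by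
          rw [tsum_mul_right, tsum_geometric_of_lt_one (by norm_num) (by norm_num)]
      _ ≤ (2 * ‖ξ‖)^2 := by
          rw [mul_pow]
          have := sq_nonneg ‖ξ‖
          nlinarith
  exact (pow_le_pow_iff_left₀ (norm_nonneg _) (by positivity) two_ne_zero).mp h1

noncomputable def Tmap (f : ℕ → A) : H →L[ℂ] lp (fun _ : ℕ => H) 2 :=
  LinearMap.mkContinuous (Tlin π ε f) 2 (norm_Tlin_le π ε f)

lemma Tmap_apply (f : ℕ → A) (ξ : H) (i : ℕ) :
    (Tmap π ε f ξ : ∀ _ : ℕ, H) i = wt π ε f i • bdry π ε (f i) ξ := rfl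


lemma bdry_zero (ξ : H) : bdry π ε (0 : A) ξ = 0 := by
  simp [bdry_apply]

lemma isClosed_range_Tmap (f : ℕ → A)
    (hf : Submodule.span ℂ (Set.range f) = ⊤)
    (hclosed : ∀ c : A →ₗ[ℂ] H,
      (∀ x y : A, c (x * y) = π x (c y) + ε y • c x) →
      (∃ ξ : ℕ → H, ∀ a : A, Tendsto (fun n => π a (ξ n) - ε a • ξ n) atTop (𝓝 (c a))) →
      ∃ ζ : H, ∀ a : A, c a = π a ζ - ε a • ζ) :
    IsClosed (Set.range (Tmap π ε f)) := by
  rw [← isSeqClosed_iff_isClosed]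
  intro x η hx hη
  choose ξ hξ using hx
  -- coordinatewise convergence
  have hcoord : ∀ i, Tendsto (fun n => wt π ε f i • bdry π ε (f i) (ξ n)) atTop (𝓝 (η i)) := by
    intro i
    have h0 : Tendsto (fun n => ‖x n - η‖) atTop (𝓝 0) :=
      tendsto_iff_norm_sub_tendsto_zero.mp hη
    have h1 : Tendsto (fun n => (x n : ∀ _ : ℕ, H) i - η i) atTop (𝓝 0) := by
      refine squeeze_zero_norm (fun n => ?_) h0
      have : (x n : ∀ _ : ℕ, H) i - η i = ((x n - η : lp (fun _ : ℕ => H) 2) : ∀ _ : ℕ, H) i := by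
        simp [lp.coeFn_sub]
      rw [this]
      exact lp.norm_apply_le_norm two_ne_zero (x n - η) i
    have h2 : Tendsto (fun n => (x n : ∀ _ : ℕ, H) i) atTop (𝓝 (η i)) := by
      have := h1.add_const (η i)
      simpa using this
    have h3 : (fun n => (x n : ∀ _ : ℕ, H) i) = fun n => wt π ε f i • bdry π ε (f i) (ξ n) := by
      funext n
      rw [← hξ n, Tmap_apply]
    rwa [h3] at h2
  have hconv : ∀ i, Tendsto (fun n => bdry π ε (f i) (ξ n)) atTop
      (𝓝 ((wt π ε f i)⁻¹ • η i)) := by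
    intro i
    have := (hcoord i).const_smul ((wt π ε f i)⁻¹)
    simpa [inv_smul_smul₀ (wt_pos π ε f i).ne'] using this
  -- extend convergence to all of A
  set Q : Submodule ℂ A :=
    { carrier := {a | ∃ L, Tendsto (fun n => bdry π ε a (ξ n)) atTop (𝓝 L)}
      add_mem' := by
        rintro a b ⟨L1, h1⟩ ⟨L2, h2⟩
        exact ⟨L1 + L2, by simpa only [bdry_add] using h1.add h2⟩
      zero_mem' := ⟨0, by simp only [bdry_zero]; exact tendsto_const_nhds⟩
      smul_mem' := by
        rintro c a ⟨L, h⟩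
        exact ⟨c • L, by simpa only [bdry_smul] using h.const_smul c⟩ } with hQdef
  have hQ : ∀ a : A, ∃ L, Tendsto (fun n => bdry π ε a (ξ n)) atTop (𝓝 L) := by
    intro a
    have hle : Submodule.span ℂ (Set.range f) ≤ Q := by
      rw [Submodule.span_le]
      rintro _ ⟨i, rfl⟩
      exact ⟨(wt π ε f i)⁻¹ • η i, hconv i⟩
    have : a ∈ Q := hle (hf ▸ Submodule.mem_top)
    exact this
  choose L hL using hQ
  have hmapadd : ∀ x y : A, L (x + y) = L x + L y := fun a b =>
    tendsto_nhds_unique (hL (a + b)) (by simpa only [bdry_add] using (hL a).add (hL b))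
  have hmapsmul : ∀ (c : ℂ) (a : A), L (c • a) = c • L a := fun c a =>
    tendsto_nhds_unique (hL (c • a)) (by simpa only [bdry_smul] using (hL a).const_smul c)
  set cL : A →ₗ[ℂ] H :=
    { toFun := L, map_add' := hmapadd, map_smul' := hmapsmul } with hcLdef
  have hcocycle : ∀ a b : A, cL (a * b) = π a (cL b) + ε b • cL a := by
    intro a b
    refine tendsto_nhds_unique (hL (a * b)) ?_
    have h1 : Tendsto (fun n => π a (bdry π ε b (ξ n))) atTop (𝓝 (π a (L b))) :=
      (((π a).continuous.tendsto _)).comp (hL b)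
    have h2 := h1.add ((hL a).const_smul (ε b))
    simp only [bdry_mul]
    exact h2
  obtain ⟨ζ, hζ⟩ := hclosed cL hcocycle
    ⟨ξ, fun a => by have h := hL a; simp only [bdry_apply] at h; exact h⟩
  refine ⟨ζ, ?_⟩
  apply lp.ext
  funext i
  rw [Tmap_apply]
  have h1 : Tendsto (fun n => wt π ε f i • bdry π ε (f i) (ξ n)) atTop
      (𝓝 (wt π ε f i • L (f i))) := (hL (f i)).const_smul _
  have h2 : wt π ε f i • L (f i) = η i := tendsto_nhds_unique h1 (hcoord i)
  rw [← h2]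
  congr 1
  have := hζ (f i)
  rw [hcLdef] at this
  simpa [bdry_apply] using this.symm


lemma norm_sq_Tmap (f : ℕ → A) (ξ : H) :
    ‖Tmap π ε f ξ‖^2 = ∑' i, ‖wt π ε f i • bdry π ε (f i) ξ‖^2 :=
  norm_sq_Tlin π ε f ξ

lemma Tmap_inj (f : ℕ → A) (hf : Submodule.span ℂ (Set.range f) = ⊤)
    (hnoinv : ∀ ξ : H, (∀ a : A, π a ξ = ε a • ξ) → ξ = 0) :
    Function.Injective (Tmap π ε f) := by
  have key : ∀ ξ : H, Tmap π ε f ξ = 0 → ξ = 0 := by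
    intro ξ hξ
    have hcoord : ∀ i, bdry π ε (f i) ξ = 0 := by
      intro i
      have h0 : wt π ε f i • bdry π ε (f i) ξ = 0 := by
        have := congrFun (congrArg (fun (v : lp (fun _ : ℕ => H) 2) => (v : ∀ _ : ℕ, H)) hξ) i
        simpa [Tmap_apply] using this
      rcases smul_eq_zero.mp h0 with h | h
      · exact absurd h (wt_pos π ε f i).ne'
      · exact h
    set Q : Submodule ℂ A :=
      { carrier := {a | bdry π ε a ξ = 0}
        add_mem' := by
          intro a b ha hb
          simp only [Set.mem_setOf_eq] at *
          rw [bdry_add, ha, hb, add_zero]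
        zero_mem' := bdry_zero π ε ξ
        smul_mem' := by
          intro c a ha
          simp only [Set.mem_setOf_eq] at *
          rw [bdry_smul, ha, smul_zero] } with hQdef
    have hall : ∀ a : A, bdry π ε a ξ = 0 := by
      intro a
      have hle : Submodule.span ℂ (Set.range f) ≤ Q := by
        rw [Submodule.span_le]
        rintro _ ⟨i, rfl⟩
        exact hcoord i
      exact hle (hf ▸ Submodule.mem_top)
    refine hnoinv ξ fun a => ?_
    have := hall a
    rw [bdry_apply, sub_eq_zero] at this
    exact this
  intro x y hxy
  have : Tmap π ε f (x - y) = 0 := by rw [map_sub, hxy, sub_self]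
  have := key _ this
  rwa [sub_eq_zero] at this

end Aux

theorem no_almost_invariant_vectors_of_inner_cocycles_closed
    {A : Type*} [Ring A] [Algebra ℂ A]
    {H : Type*} [NormedAddCommGroup H] [InnerProductSpace ℂ H] [CompleteSpace H]
    (π : A →ₐ[ℂ] (H →L[ℂ] H)) (ε : A →ₐ[ℂ] ℂ)
    -- `A` is countably spanned:
    (hcount : ∃ D : Set A, D.Countable ∧ Submodule.span ℂ D = ⊤)
    -- `π` has no nonzero invariant vector:
    (hnoinv : ∀ ξ : H, (∀ a : A, π a ξ = ε a • ξ) → ξ = 0)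
    -- every 1-cocycle that is a pointwise limit of inner cocycles is inner:
    (hclosed : ∀ c : A →ₗ[ℂ] H,
      (∀ x y : A, c (x * y) = π x (c y) + ε y • c x) →
      (∃ ξ : ℕ → H, ∀ a : A, Tendsto (fun n => π a (ξ n) - ε a • ξ n) atTop (𝓝 (c a))) →
      ∃ ζ : H, ∀ a : A, c a = π a ζ - ε a • ζ) :
    ∃ S : Finset A, S.Nonempty ∧ ∃ δ : ℝ, 0 < δ ∧
      ∀ ξ : H, ∃ a ∈ S, δ * ‖ξ‖ ≤ ‖π a ξ - ε a • ξ‖ := by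
  classical
  -- enumerate a countable spanning set
  obtain ⟨D, hDc, hDspan⟩ := hcount
  obtain ⟨f, hfrange⟩ := (hDc.insert 0).exists_eq_range (Set.insert_nonempty 0 D)
  have hf : Submodule.span ℂ (Set.range f) = ⊤ := by
    rw [← hfrange, Submodule.span_insert_zero, hDspan]
  -- the weighted boundary operator into ℓ²
  set T := Tmap π ε f with hT
  have hinj : Function.Injective T := Tmap_inj π ε f hf hnoinv
  have hclo : IsClosed (Set.range T) := isClosed_range_Tmap π ε f hf hclosed
  obtain ⟨K, hK, hbound⟩ : ∃ K : ℝ, 0 < K ∧ ∀ ξ : H, ‖ξ‖ ≤ K * ‖T ξ‖ := by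
    set e := T.equivRange hinj hclo with he
    refine ⟨‖e.symm.toContinuousLinearMap‖ + 1, by positivity, fun ξ => ?_⟩
    have h1 : ξ = e.symm (e ξ) := (e.symm_apply_apply ξ).symm
    have h2 : ‖e.symm (e ξ)‖ ≤ ‖e.symm.toContinuousLinearMap‖ * ‖e ξ‖ :=
      e.symm.toContinuousLinearMap.le_opNorm (e ξ)
    have h3 : ‖e ξ‖ = ‖T ξ‖ := rfl
    rw [h3] at h2
    calc ‖ξ‖ = ‖e.symm (e ξ)‖ := by rw [← h1]
      _ ≤ ‖e.symm.toContinuousLinearMap‖ * ‖T ξ‖ := h2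
      _ ≤ (‖e.symm.toContinuousLinearMap‖ + 1) * ‖T ξ‖ := by
          apply mul_le_mul_of_nonneg_right _ (norm_nonneg _)
          linarith
  -- choose the cutoff
  obtain ⟨N, hN⟩ := exists_pow_lt_of_lt_one (show (0:ℝ) < 1/(4*K^2) by positivity)
    (show (1/4:ℝ) < 1 by norm_num)
  refine ⟨(Finset.range (N+1)).image f, ⟨f 0, Finset.mem_image_of_mem f (by simp)⟩,
    1/(2*K), by positivity, ?_⟩
  intro ξ
  by_contra hcon
  push_neg at hcon
  have hsmall : ∀ i < N + 1, ‖bdry π ε (f i) ξ‖ < 1/(2*K) * ‖ξ‖ := by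
    intro i hi
    have := hcon (f i) (Finset.mem_image_of_mem f (Finset.mem_range.mpr hi))
    rwa [bdry_apply]
  have hξpos : 0 < ‖ξ‖ := by
    by_contra hx
    push_neg at hx
    have h0 := hsmall 0 (by omega)
    have : ‖ξ‖ = 0 := le_antisymm hx (norm_nonneg ξ)
    rw [this] at h0
    simp only [mul_zero] at h0
    exact absurd h0 (norm_nonneg _).not_gt
  -- summability of the coordinate norms squared
  have hsum : Summable fun i => ‖wt π ε f i • bdry π ε (f i) ξ‖^2 := by
    have := summable_wt π ε f ξ
    simpa only [rpow_two'] using this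
  -- split the norm into head and tail
  have hsplit := Summable.sum_add_tsum_nat_add (f := fun i => ‖wt π ε f i • bdry π ε (f i) ξ‖^2)
    (N+1) hsum
  -- head bound
  have hgeo : Summable fun i : ℕ => (1/4:ℝ)^i := summable_geometric_of_lt_one
    (by norm_num) (by norm_num)
  have htsumgeo : ∑' i : ℕ, (1/4:ℝ)^i = 4/3 := by
    rw [tsum_geometric_of_lt_one (by norm_num) (by norm_num)]
    norm_num
  have hhead : ∑ i ∈ Finset.range (N+1), ‖wt π ε f i • bdry π ε (f i) ξ‖^2
      ≤ (4/3) * ((1/(2*K) * ‖ξ‖)^2) := by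
    calc ∑ i ∈ Finset.range (N+1), ‖wt π ε f i • bdry π ε (f i) ξ‖^2
        ≤ ∑ i ∈ Finset.range (N+1), (1/4:ℝ)^i * ((1/(2*K) * ‖ξ‖)^2) := by
          refine Finset.sum_le_sum fun i hi => ?_
          have h1 : ‖wt π ε f i • bdry π ε (f i) ξ‖ ≤ (1/2:ℝ)^i * (1/(2*K) * ‖ξ‖) := by
            rw [norm_smul, Real.norm_eq_abs, abs_of_pos (wt_pos π ε f i)]
            exact mul_le_mul (wt_le π ε f i) (hsmall i (Finset.mem_range.mp hi)).le
              (norm_nonneg _) (by positivity)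
          calc ‖wt π ε f i • bdry π ε (f i) ξ‖^2
              ≤ ((1/2:ℝ)^i * (1/(2*K) * ‖ξ‖))^2 := pow_le_pow_left₀ (norm_nonneg _) h1 2
            _ = (1/4:ℝ)^i * ((1/(2*K) * ‖ξ‖)^2) := by
                rw [mul_pow, ← pow_mul, mul_comm i 2, pow_mul]; norm_num
      _ = (∑ i ∈ Finset.range (N+1), (1/4:ℝ)^i) * ((1/(2*K) * ‖ξ‖)^2) := by
          rw [Finset.sum_mul]
      _ ≤ (4/3) * ((1/(2*K) * ‖ξ‖)^2) := by
          apply mul_le_mul_of_nonneg_right _ (by positivity)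
          calc ∑ i ∈ Finset.range (N+1), (1/4:ℝ)^i ≤ ∑' i : ℕ, (1/4:ℝ)^i :=
                Summable.sum_le_tsum _ (fun i _ => by positivity) hgeo
            _ = 4/3 := htsumgeo
  -- tail bound
  have htail : ∑' i : ℕ, ‖wt π ε f (i + (N+1)) • bdry π ε (f (i + (N+1))) ξ‖^2
      ≤ (1/4:ℝ)^N * ‖ξ‖^2 := by
    have hsum2 : Summable fun i : ℕ =>
        ‖wt π ε f (i + (N+1)) • bdry π ε (f (i + (N+1))) ξ‖^2 :=
      (summable_nat_add_iff (N+1)).mpr hsum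
    have hsum3 : Summable fun i : ℕ => (1/4:ℝ)^(i + (N+1)) * ‖ξ‖^2 := by
      simp_rw [pow_add]
      exact ((hgeo.mul_right _).mul_right _)
    calc ∑' i : ℕ, ‖wt π ε f (i + (N+1)) • bdry π ε (f (i + (N+1))) ξ‖^2
        ≤ ∑' i : ℕ, (1/4:ℝ)^(i + (N+1)) * ‖ξ‖^2 := by
          refine Summable.tsum_le_tsum (fun i => ?_) hsum2 hsum3
          calc ‖wt π ε f (i + (N+1)) • bdry π ε (f (i + (N+1))) ξ‖^2
              ≤ ((1/2:ℝ)^(i + (N+1)) * ‖ξ‖)^2 :=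
                pow_le_pow_left₀ (norm_nonneg _) (wt_norm π ε f _ ξ) 2
            _ = (1/4:ℝ)^(i + (N+1)) * ‖ξ‖^2 := by
                rw [mul_pow, ← pow_mul, mul_comm _ 2, pow_mul]; norm_num
      _ = (1/4:ℝ)^(N+1) * (4/3) * ‖ξ‖^2 := by
          simp_rw [pow_add, mul_assoc]
          rw [tsum_mul_right, htsumgeo]
          ring
      _ ≤ (1/4:ℝ)^N * ‖ξ‖^2 := by
          have : (1/4:ℝ)^(N+1) * (4/3) ≤ (1/4:ℝ)^N := by
            rw [pow_succ]
            have : (0:ℝ) < (1/4:ℝ)^N := by positivity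
            nlinarith
          nlinarith [sq_nonneg ‖ξ‖]
  -- combine
  have hTsq : ‖T ξ‖^2 ≤ (4/3) * ((1/(2*K) * ‖ξ‖)^2) + (1/4:ℝ)^N * ‖ξ‖^2 := by
    rw [hT, norm_sq_Tmap, ← hsplit]
    exact add_le_add hhead htail
  have hx2 : ‖ξ‖^2 ≤ K^2 * ‖T ξ‖^2 := by
    have := hbound ξ
    nlinarith [norm_nonneg (T ξ), norm_nonneg ξ]
  have hNle : (1/4:ℝ)^N ≤ 1/(4*K^2) := hN.le
  have hfinal : ‖ξ‖^2 ≤ (11/12) * ‖ξ‖^2 := by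
    have hq : (1/(2*K) * ‖ξ‖)^2 = 1/(4*K^2) * ‖ξ‖^2 := by
      rw [mul_pow, div_pow, one_pow, mul_pow]
      norm_num
    rw [hq] at hTsq
    have hKsq : (0:ℝ) < K^2 := by positivity
    have hmul := mul_le_mul_of_nonneg_left hTsq hKsq.le
    have h1 : K^2 * ((4/3) * (1/(4*K^2) * ‖ξ‖^2) + (1/4:ℝ)^N * ‖ξ‖^2)
        = 1/3 * ‖ξ‖^2 + K^2 * (1/4:ℝ)^N * ‖ξ‖^2 := by
      field_simp
    have h2 : K^2 * (1/4:ℝ)^N * ‖ξ‖^2 ≤ 1/4 * ‖ξ‖^2 := by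
      have h3 := mul_le_mul_of_nonneg_right
        (mul_le_mul_of_nonneg_left hNle hKsq.le) (sq_nonneg ‖ξ‖)
      calc K^2 * (1/4:ℝ)^N * ‖ξ‖^2 ≤ K^2 * (1/(4*K^2)) * ‖ξ‖^2 := h3
        _ = 1/4 * ‖ξ‖^2 := by field_simp
    linarith [sq_nonneg ‖ξ‖]
  nlinarith [pow_pos hξpos 2]
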